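/- Let X be a metric space with bounded geometry at scale 1/5, and write |·| for the 1/5-volume. Let ε ≥ 1, let A ⊆ X be a bounded subset, and let Z ⊆ A be a maximal ε-separated subset of A (i.e. any two distinct points of Z are at distance > ε, and every point of A lies within distance ε of Z). Set α = sup_{x∈X} |B(x,2ε)|, which is finite by bounded geometry. Then for every subset B ⊆ A: (1/α)·|B| ≤ #(B^{+ε} ∩ Z) ≤ α·|B|, where # denotes cardinality. -/
import Mathlib


open Metric Set

/-- The `α`-neighbourhood `A^{+α}` of a subset `A` of a metric space. -/
def thickSet {X : Type*} [PseudoMetricSpace X] (A : Set X) (α : ℝ) : Set X :=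
  {x | ∃ a ∈ A, dist x a ≤ α}

/-- `X` has bounded geometry at scale `s`: every ball of radius `r` can be covered by a
uniformly bounded number of closed balls of radius `s`. -/
def BddGeomAtScale (X : Type*) [PseudoMetricSpace X] (s : ℝ) : Prop :=
  ∀ r ≥ (0 : ℝ), ∃ n : ℕ, ∀ x : X, ∃ F : Finset X,
    F.card ≤ n ∧ Metric.closedBall x r ⊆ ⋃ c ∈ F, Metric.closedBall c s

/-- The `s`-volume of a subset `A`: the minimal number of closed balls of radius `s`
needed to cover `A`. -/
noncomputable def svol {X : Type*} [PseudoMetricSpace X] (s : ℝ) (A : Set X) : ℕ :=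
  sInf {n : ℕ | ∃ F : Finset X, F.card = n ∧ A ⊆ ⋃ c ∈ F, Metric.closedBall c s}

lemma svol_le_card {X : Type*} [PseudoMetricSpace X] {s : ℝ} {A : Set X} {F : Finset X}
    (h : A ⊆ ⋃ c ∈ F, Metric.closedBall c s) : svol s A ≤ F.card :=
  Nat.sInf_le ⟨F, rfl, h⟩

lemma svol_exists {X : Type*} [PseudoMetricSpace X] {s : ℝ} {A : Set X}
    (h : ∃ F : Finset X, A ⊆ ⋃ c ∈ F, Metric.closedBall c s) :
    ∃ F : Finset X, F.card = svol s A ∧ A ⊆ ⋃ c ∈ F, Metric.closedBall c s := by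
  obtain ⟨F, hF⟩ := h
  exact Nat.sInf_mem (⟨F.card, F, rfl, hF⟩ :
    Set.Nonempty {n : ℕ | ∃ F : Finset X, F.card = n ∧ A ⊆ ⋃ c ∈ F, Metric.closedBall c s})


/-- Comparison between the `1/5`-volume of a subset `B ⊆ A` and the number of points of a
maximal `ε`-separated net `Z ⊆ A` lying in `B^{+ε}`:
`(1/α)|B| ≤ #(B^{+ε} ∩ Z) ≤ α|B|` with `α = sup_x |B(x, 2ε)|`. -/
theorem svol_vs_net_count
    {X : Type*} [MetricSpace X] (hbg : BddGeomAtScale X (1 / 5))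
    (ε : ℝ) (hε : 1 ≤ ε) (A : Set X) (hA : Bornology.IsBounded A)
    (Z : Set X) (hZA : Z ⊆ A)
    (hsepZ : ∀ z ∈ Z, ∀ z' ∈ Z, z ≠ z' → ε < dist z z')
    (hmax : ∀ a ∈ A, ∃ z ∈ Z, dist a z ≤ ε)
    (B : Set X) (hB : B ⊆ A) :
    (svol (1 / 5) B : ℝ) / ((⨆ x : X, svol (1 / 5) (Metric.closedBall x (2 * ε))) : ℝ) ≤
        ((thickSet B ε ∩ Z).ncard : ℝ) ∧
      ((thickSet B ε ∩ Z).ncard : ℝ) ≤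
        ((⨆ x : X, svol (1 / 5) (Metric.closedBall x (2 * ε))) : ℝ) * (svol (1 / 5) B : ℝ) := by
  classical
  rcases isEmpty_or_nonempty X with hX | hX
  · have hBe : B = ∅ := Set.eq_empty_of_isEmpty B
    have hZe : Z = ∅ := Set.eq_empty_of_isEmpty Z
    have hsv : svol (1/5 : ℝ) B = 0 :=
      Nat.sInf_eq_zero.2 (Or.inl ⟨∅, by simp, by simp [hBe]⟩)
    simp [hBe, hZe, hsv, iSup_of_empty', Real.sSup_empty]
  set α := ⨆ x : X, svol (1 / 5) (Metric.closedBall x (2 * ε)) with hαdef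
  -- Nonempty case
  have hε0 : (0:ℝ) ≤ ε := le_trans zero_le_one hε
  have h2ε : (0:ℝ) ≤ 2 * ε := by linarith
  obtain ⟨n, hn⟩ := hbg (2 * ε) h2ε
  have hball_ne : ∀ x : X, ∃ F : Finset X,
      Metric.closedBall x (2 * ε) ⊆ ⋃ c ∈ F, Metric.closedBall c (1/5) := by
    intro x; obtain ⟨F, _, hF⟩ := hn x; exact ⟨F, hF⟩
  have hsv_le_n : ∀ x : X, svol (1/5 : ℝ) (Metric.closedBall x (2 * ε)) ≤ n := by
    intro x; obtain ⟨F, hc, hF⟩ := hn x; exact le_trans (svol_le_card hF) hc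
  have hbdd : BddAbove (Set.range fun x : X => svol (1/5 : ℝ) (Metric.closedBall x (2 * ε))) :=
    ⟨n, by rintro _ ⟨x, rfl⟩; exact hsv_le_n x⟩
  have hxα : ∀ x : X, svol (1/5 : ℝ) (Metric.closedBall x (2 * ε)) ≤ α := fun x =>
    le_ciSup hbdd x
  -- α ≥ 1
  obtain ⟨x0⟩ := hX
  haveI : Nonempty X := ⟨x0⟩
  have hα1 : 1 ≤ α := by
    refine le_trans ?_ (hxα x0)
    by_contra h
    have h0 : svol (1/5 : ℝ) (Metric.closedBall x0 (2 * ε)) = 0 := by omega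
    obtain ⟨F, hFc, hFcov⟩ := svol_exists (hball_ne x0)
    rw [h0, Finset.card_eq_zero] at hFc
    subst hFc
    have := hFcov (Metric.mem_closedBall_self h2ε)
    simpa using this
  -- cover function for 2ε-balls
  have hcov2 : ∀ x : X, ∃ G : Finset X, G.card ≤ α ∧
      Metric.closedBall x (2 * ε) ⊆ ⋃ g ∈ G, Metric.closedBall g (1/5) := by
    intro x
    obtain ⟨G, hGc, hGcov⟩ := svol_exists (hball_ne x)
    exact ⟨G, hGc ▸ hxα x, hGcov⟩
  choose G hGcard hGcov using hcov2
  -- separation: two points of Z in a common 1/5-ball coincide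
  have hsep' : ∀ z ∈ Z, ∀ z' ∈ Z, ∀ g : X,
      z ∈ Metric.closedBall g (1/5) → z' ∈ Metric.closedBall g (1/5) → z = z' := by
    intro z hz z' hz' g hg hg'
    by_contra hne
    have h1 := hsepZ z hz z' hz' hne
    have h2 : dist z z' ≤ dist z g + dist g z' := dist_triangle _ _ _
    rw [Metric.mem_closedBall] at hg hg'
    rw [dist_comm] at hg'
    linarith
  -- minimal cover of B
  obtain ⟨r, hr⟩ := hA.subset_closedBall x0
  obtain ⟨m, hm⟩ := hbg (max r 0) (le_max_right _ _)
  obtain ⟨F0, _, hF0⟩ := hm x0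
  have hBcov0 : B ⊆ ⋃ c ∈ F0, Metric.closedBall c (1/5) :=
    fun b hb => hF0 (Metric.closedBall_subset_closedBall (le_max_left _ _) (hr (hB hb)))
  obtain ⟨F, hFcard, hFcov⟩ := svol_exists ⟨F0, hBcov0⟩
  set S := thickSet B ε ∩ Z with hSdef
  set T : Finset X := F.biUnion G with hTdef
  -- the choice map S → T
  set f : X → X := fun z =>
    if h : ∃ g ∈ T, z ∈ Metric.closedBall g (1/5) then h.choose else z with hfdef
  have hfS : ∀ z ∈ S, f z ∈ (T : Set X) ∧ z ∈ Metric.closedBall (f z) (1/5) := by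
    rintro z ⟨⟨b, hbB, hzb⟩, hzZ⟩
    have hbU := hFcov hbB
    simp only [Set.mem_iUnion] at hbU
    obtain ⟨c, hcF, hbc⟩ := hbU
    have hzc : z ∈ Metric.closedBall c (2 * ε) := by
      rw [Metric.mem_closedBall] at hbc ⊢
      calc dist z c ≤ dist z b + dist b c := dist_triangle _ _ _
        _ ≤ ε + 1/5 := by linarith
        _ ≤ 2 * ε := by linarith
    have hzU := hGcov c hzc
    simp only [Set.mem_iUnion] at hzU
    obtain ⟨g, hgG, hzg⟩ := hzU
    have hex : ∃ g ∈ T, z ∈ Metric.closedBall g (1/5) :=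
      ⟨g, Finset.mem_biUnion.2 ⟨c, hcF, hgG⟩, hzg⟩
    have hspec := hex.choose_spec
    simp only [hfdef, dif_pos hex]
    exact ⟨hspec.1, hspec.2⟩
  have hinj : Set.InjOn f S := by
    intro z hz z' hz' hzz'
    have h1 := (hfS z hz).2
    have h2 := (hfS z' hz').2
    rw [hzz'] at h1
    exact hsep' z hz.2 z' hz'.2 (f z') h1 h2
  have hTcard : T.card ≤ svol (1/5 : ℝ) B * α := by
    calc T.card ≤ ∑ c ∈ F, (G c).card := Finset.card_biUnion_le
      _ ≤ ∑ _c ∈ F, α := Finset.sum_le_sum fun c _ => hGcard c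
      _ = F.card * α := by rw [Finset.sum_const, smul_eq_mul]
      _ = svol (1/5 : ℝ) B * α := by rw [hFcard]
  have hNle : S.ncard ≤ svol (1/5 : ℝ) B * α := by
    refine le_trans (Set.ncard_le_ncard_of_injOn f (fun z hz => (hfS z hz).1) hinj
      T.finite_toSet) ?_
    rw [Set.ncard_coe_finset]
    exact hTcard
  have hSfin : S.Finite := by
    refine Set.Finite.of_finite_image ?_ hinj
    exact T.finite_toSet.subset (Set.image_subset_iff.2 fun z hz => (hfS z hz).1)
  -- lower bound: B covered by 2ε-balls around S
  have hBcovS : B ⊆ ⋃ g ∈ hSfin.toFinset.biUnion G, Metric.closedBall g (1/5) := by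
    intro b hb
    obtain ⟨z, hzZ, hbz⟩ := hmax b (hB hb)
    have hzS : z ∈ S := ⟨⟨b, hb, by rwa [dist_comm]⟩, hzZ⟩
    have hbball : b ∈ Metric.closedBall z (2 * ε) := by
      rw [Metric.mem_closedBall]; linarith
    have := hGcov z hbball
    simp only [Set.mem_iUnion] at this
    obtain ⟨g, hg, hbg'⟩ := this
    exact Set.mem_iUnion₂.2 ⟨g, Finset.mem_biUnion.2 ⟨z, hSfin.mem_toFinset.2 hzS, hg⟩, hbg'⟩
  have hvle : svol (1/5 : ℝ) B ≤ S.ncard * α := by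
    calc svol (1/5 : ℝ) B ≤ (hSfin.toFinset.biUnion G).card := svol_le_card hBcovS
      _ ≤ ∑ z ∈ hSfin.toFinset, (G z).card := Finset.card_biUnion_le
      _ ≤ ∑ _z ∈ hSfin.toFinset, α := Finset.sum_le_sum fun z _ => hGcard z
      _ = hSfin.toFinset.card * α := by rw [Finset.sum_const, smul_eq_mul]
      _ = S.ncard * α := by rw [Set.ncard_eq_toFinset_card S hSfin]
  have hαpos : (0:ℝ) < (α : ℝ) := by exact_mod_cast hα1
  have hbddR : BddAbove (Set.range fun x : X => ((svol (1/5 : ℝ) (Metric.closedBall x (2 * ε)) : ℕ) : ℝ)) :=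
    ⟨n, by rintro _ ⟨x, rfl⟩; simp only []; exact_mod_cast hsv_le_n x⟩
  have hcast : (⨆ x : X, ((svol (1/5 : ℝ) (Metric.closedBall x (2 * ε)) : ℕ) : ℝ)) = (α : ℝ) := by
    apply le_antisymm
    · exact ciSup_le fun x => by exact_mod_cast hxα x
    · obtain ⟨x, hx⟩ := Nat.sSup_mem (Set.range_nonempty _) hbdd
      rw [hαdef, iSup]
      rw [← hx]
      exact le_ciSup hbddR x
  rw [show ((1:ℝ)/5) = (1/5 : ℝ) from rfl] at *
  rw [hcast]
  constructor
  · show (svol (1/5 : ℝ) B : ℝ) / (α : ℝ) ≤ (S.ncard : ℝ)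
    rw [div_le_iff₀ hαpos]
    exact_mod_cast hvle
  · show (S.ncard : ℝ) ≤ (α : ℝ) * (svol (1/5 : ℝ) B : ℝ)
    calc ((S.ncard : ℝ)) ≤ (svol (1/5 : ℝ) B * α : ℕ) := by exact_mod_cast hNle
      _ = (α : ℝ) * (svol (1/5 : ℝ) B : ℝ) := by push_cast; ring
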